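/- Let K_n = Λ_{F_2}(a_1,...,a_n) ⊗ F_2[b_1,...,b_n] with Σ_n acting by simultaneously permuting the a's and b's, and let L_n = K_n^{Σ_n}. If m = a_I b_I^{d_I} a_J b_K^{e_K} is a monomial with both a bound a-variable and a free a-variable (i.e., I ≠ ∅ and J ≠ ∅), then the orbit sum [m] lies in I² where I is the augmentation ideal of L_n; that is, [m] is decomposable. -/

import Mathlib

open MvPolynomial

/-- The ideal generated by the squares of the `a`-variables (indexed by `Sum.inl`); the
quotient is `K_n = Λ_{F₂}(a_1,…,a_n) ⊗ F₂[b_1,…,b_n]` (char 2), with the `b`-variables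
indexed by `Sum.inr`. -/
noncomputable def sqIdealK (n : ℕ) : Ideal (MvPolynomial (Fin n ⊕ Fin n) (ZMod 2)) :=
  Ideal.span (Set.range fun i : Fin n =>
    (X (Sum.inl i) : MvPolynomial (Fin n ⊕ Fin n) (ZMod 2)) ^ 2)

/-- `K_n = Λ_{F₂}(a_1,…,a_n) ⊗ F₂[b_1,…,b_n]`. -/
noncomputable abbrev Kn (n : ℕ) : Type :=
  MvPolynomial (Fin n ⊕ Fin n) (ZMod 2) ⧸ sqIdealK n

/-- The action of `g ∈ Σ_n` on `K_n`, permuting the `a`'s and `b`'s simultaneously. -/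
noncomputable def permActK (n : ℕ) (g : Equiv.Perm (Fin n)) : Kn n →ₐ[ZMod 2] Kn n :=
  Ideal.Quotient.liftₐ (sqIdealK n)
    ((Ideal.Quotient.mkₐ (ZMod 2) (sqIdealK n)).comp
      (rename (Sum.map g g) : _ →ₐ[ZMod 2] _))
    (by
      intro a ha
      refine Submodule.span_induction ?_ ?_ ?_ ?_ ha
      · rintro _ ⟨i, rfl⟩
        rw [AlgHom.comp_apply, map_pow, rename_X, Ideal.Quotient.mkₐ_eq_mk,
          Ideal.Quotient.eq_zero_iff_mem]
        exact Ideal.subset_span ⟨g i, rfl⟩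
      · exact map_zero _
      · intro x y _ _ hx hy; rw [map_add, hx, hy, add_zero]
      · intro c x _ hx; rw [smul_eq_mul, map_mul, hx, mul_zero])

/-- `L_n = K_n^{Σ_n}`, the subalgebra of invariants. -/
noncomputable def Ln (n : ℕ) : Subalgebra (ZMod 2) (Kn n) where
  carrier := {x | ∀ g : Equiv.Perm (Fin n), permActK n g x = x}
  add_mem' := fun hx hy => by intro g; rw [map_add, hx g, hy g]
  mul_mem' := fun hx hy => by intro g; rw [map_mul, hx g, hy g]
  algebraMap_mem' := fun r g => (permActK n g).commutes r

/-- The orbit sum `[m]` of a monomial (given by its exponent vector `μ`): the sum over the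
`Σ_n`-orbit of `m`, each distinct monomial appearing exactly once. -/
noncomputable def orbitSum (n : ℕ) (μ : (Fin n ⊕ Fin n) →₀ ℕ) : Kn n :=
  Ideal.Quotient.mk (sqIdealK n)
    (∑ ν ∈ Finset.image
        (fun g : Equiv.Perm (Fin n) => Finsupp.equivMapDomain (Equiv.sumCongr g g) μ)
        Finset.univ,
      monomial ν (1 : ZMod 2))

/-- The augmentation `K_n → F₂` sending all variables to zero. -/
noncomputable def augK (n : ℕ) : Kn n →ₐ[ZMod 2] ZMod 2 :=
  Ideal.Quotient.liftₐ (sqIdealK n) (aeval 0)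
    (by
      intro a ha
      refine Submodule.span_induction ?_ ?_ ?_ ?_ ha
      · rintro _ ⟨i, rfl⟩
        simp
      · exact map_zero _
      · intro x y _ _ hx hy; rw [map_add, hx, hy, add_zero]
      · intro c x _ hx; rw [smul_eq_mul, map_mul, hx, mul_zero])

/-- The augmentation ideal `I ⊆ L_n`. -/
noncomputable def augIdealL (n : ℕ) : Ideal (Ln n) :=
  RingHom.ker (((augK n).comp (Ln n).val : Ln n →ₐ[ZMod 2] ZMod 2) : Ln n →+* ZMod 2)


namespace S13
open Finset Equiv Sum

variable {n : ℕ}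

abbrev Vn (n : ℕ) := Fin n ⊕ Fin n
abbrev Rn (n : ℕ) := MvPolynomial (Vn n) (ZMod 2)

def act (σ : Equiv.Perm (Fin n)) (μ : Vn n →₀ ℕ) : Vn n →₀ ℕ :=
  Finsupp.equivMapDomain (Equiv.sumCongr σ σ) μ

@[simp] lemma act_inl (σ : Equiv.Perm (Fin n)) (μ : Vn n →₀ ℕ) (i : Fin n) :
    act σ μ (inl i) = μ (inl (σ⁻¹ i)) := rfl

@[simp] lemma act_inr (σ : Equiv.Perm (Fin n)) (μ : Vn n →₀ ℕ) (i : Fin n) :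
    act σ μ (inr i) = μ (inr (σ⁻¹ i)) := rfl

lemma act_apply (σ : Equiv.Perm (Fin n)) (μ : Vn n →₀ ℕ) (v : Vn n) :
    act σ μ v = μ (Sum.map (⇑σ⁻¹) (⇑σ⁻¹) v) := by
  cases v <;> rfl

lemma act_add (σ : Equiv.Perm (Fin n)) (μ ν : Vn n →₀ ℕ) :
    act σ (μ + ν) = act σ μ + act σ ν := by
  ext v; cases v <;> simp

lemma act_act (σ τ : Equiv.Perm (Fin n)) (μ : Vn n →₀ ℕ) :
    act σ (act τ μ) = act (σ * τ) μ := by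
  ext v; cases v <;> simp [mul_inv_rev]

@[simp] lemma act_one (μ : Vn n →₀ ℕ) : act 1 μ = μ := by
  ext v; cases v <;> simp

lemma act_injective (σ : Equiv.Perm (Fin n)) : Function.Injective (act (n := n) σ) := by
  intro μ ν h
  have := congrArg (act σ⁻¹) h
  simpa [act_act] using this

def SF (μ : Vn n →₀ ℕ) : Prop := ∀ i, μ (inl i) ≤ 1

instance : DecidablePred (SF (n := n)) := fun _ => by unfold SF; infer_instance

lemma SF_act {σ : Equiv.Perm (Fin n)} {μ : Vn n →₀ ℕ} (h : SF μ) : SF (act σ μ) := by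
  intro i; simpa using h (σ⁻¹ i)

def bnd (μ : Vn n →₀ ℕ) : Finset (Fin n) :=
  Finset.univ.filter (fun i => μ (inl i) ≠ 0 ∧ μ (inr i) ≠ 0)

def fre (μ : Vn n →₀ ℕ) : Finset (Fin n) :=
  Finset.univ.filter (fun i => μ (inl i) ≠ 0 ∧ μ (inr i) = 0)

def fb (μ : Vn n →₀ ℕ) : Finset (Fin n) :=
  Finset.univ.filter (fun i => μ (inl i) = 0 ∧ μ (inr i) ≠ 0)

lemma mem_bnd {μ : Vn n →₀ ℕ} {i : Fin n} :
    i ∈ bnd μ ↔ μ (inl i) ≠ 0 ∧ μ (inr i) ≠ 0 := by simp [bnd]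

lemma mem_fre {μ : Vn n →₀ ℕ} {i : Fin n} :
    i ∈ fre μ ↔ μ (inl i) ≠ 0 ∧ μ (inr i) = 0 := by simp [fre]

lemma mem_fb {μ : Vn n →₀ ℕ} {i : Fin n} :
    i ∈ fb μ ↔ μ (inl i) = 0 ∧ μ (inr i) ≠ 0 := by simp [fb]

lemma bnd_act (σ : Equiv.Perm (Fin n)) (μ : Vn n →₀ ℕ) :
    bnd (act σ μ) = (bnd μ).image σ := by
  ext i
  simp only [mem_bnd, act_inl, act_inr, Finset.mem_image]
  constructor
  · intro h; exact ⟨σ⁻¹ i, h, by simp⟩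
  · rintro ⟨a, ha, rfl⟩; simpa using ha

lemma fre_act (σ : Equiv.Perm (Fin n)) (μ : Vn n →₀ ℕ) :
    fre (act σ μ) = (fre μ).image σ := by
  ext i
  simp only [mem_fre, act_inl, act_inr, Finset.mem_image]
  constructor
  · intro h; exact ⟨σ⁻¹ i, h, by simp⟩
  · rintro ⟨a, ha, rfl⟩; simpa using ha

lemma fb_act (σ : Equiv.Perm (Fin n)) (μ : Vn n →₀ ℕ) :
    fb (act σ μ) = (fb μ).image σ := by
  ext i
  simp only [mem_fb, act_inl, act_inr, Finset.mem_image]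
  constructor
  · intro h; exact ⟨σ⁻¹ i, h, by simp⟩
  · rintro ⟨a, ha, rfl⟩; simpa using ha

/-- squarefree part of a polynomial -/
noncomputable def sfpart (p : Rn n) : Rn n :=
  ∑ ν ∈ p.support.filter (SF (n := n)), monomial ν (coeff ν p)

lemma coeff_sfpart (p : Rn n) (lam : Vn n →₀ ℕ) :
    coeff lam (sfpart p) = if SF lam then coeff lam p else 0 := by
  rw [sfpart, coeff_sum]
  simp only [coeff_monomial]
  rw [Finset.sum_ite_eq' (p.support.filter (SF (n := n))) lam (fun ν => coeff ν p)]
  by_cases h1 : SF lam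
  · by_cases h2 : lam ∈ p.support
    · simp [h1, h2]
    · simp [h1, h2, MvPolynomial.notMem_support_iff.1 h2]
  · simp [h1]

lemma sfpart_eq_zero_iff {p : Rn n} :
    sfpart p = 0 ↔ ∀ lam, SF lam → coeff lam p = 0 := by
  constructor
  · intro h lam hl
    have := congrArg (coeff lam) h
    rw [coeff_sfpart] at this
    simpa [hl] using this
  · intro h
    apply MvPolynomial.ext
    intro lam
    rw [coeff_sfpart]
    by_cases hl : SF lam <;> simp [hl, h]


lemma add_self_zero {A : Type*} [AddCommMonoid A] [Module (ZMod 2) A] (p : A) : p + p = 0 := by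
  have h2 : (2 : ZMod 2) = 0 := rfl
  calc p + p = (2 : ZMod 2) • p := by rw [two_smul]
  _ = 0 := by rw [h2, zero_smul]

lemma add_eq_iff {A : Type*} [AddCommMonoid A] [Module (ZMod 2) A] {p q r : A} :
    p + q = r ↔ p = r + q := by
  constructor
  · rintro rfl; rw [add_assoc, add_self_zero, add_zero]
  · rintro rfl; rw [add_assoc, add_self_zero, add_zero]

lemma mk_eq_zero_iff {p : Rn n} :
    Ideal.Quotient.mk (sqIdealK n) p = 0 ↔ sfpart p = 0 := by
  rw [Ideal.Quotient.eq_zero_iff_mem]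
  constructor
  · intro hp
    refine Submodule.span_induction ?_ ?_ ?_ ?_ hp
    · rintro _ ⟨i, rfl⟩
      rw [sfpart_eq_zero_iff]
      intro lam hl
      by_contra hc
      have hsupp : lam ∈ ((X (inl i) : Rn n) ^ 2).support := MvPolynomial.mem_support_iff.2 hc
      have : (X (inl i) : Rn n) ^ 2 = monomial (Finsupp.single (inl i) 2) 1 :=
        X_pow_eq_monomial
      rw [this, MvPolynomial.support_monomial] at hsupp
      simp only [one_ne_zero, if_false] at hsupp
      rw [Finset.mem_singleton] at hsupp
      subst hsupp
      have := hl i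
      simp at this
    · simp [sfpart_eq_zero_iff]
    · intro x y _ _ hx hy
      rw [sfpart_eq_zero_iff] at *
      intro lam hl
      rw [coeff_add, hx lam hl, hy lam hl, add_zero]
    · intro r x _ hx
      rw [sfpart_eq_zero_iff] at *
      intro lam hl
      rw [smul_eq_mul, coeff_mul]
      apply Finset.sum_eq_zero
      rintro ⟨u, v⟩ huv
      have hsum : u + v = lam := Finset.HasAntidiagonal.mem_antidiagonal.1 huv
      have hv : SF v := by
        intro i
        have : v (inl i) ≤ lam (inl i) := by
          rw [← hsum]; simp
        exact le_trans this (hl i)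
      rw [hx v hv, mul_zero]
  · intro hp
    have : p = ∑ ν ∈ p.support, monomial ν (coeff ν p) := (as_sum p)
    rw [this]
    apply Ideal.sum_mem
    intro ν hν
    have hν' : ¬ SF ν := by
      intro hSF
      exact MvPolynomial.mem_support_iff.1 hν (sfpart_eq_zero_iff.1 hp ν hSF)
    simp only [SF, not_forall, not_le] at hν'
    obtain ⟨i, hi⟩ := hν'
    have hle : Finsupp.single (inl i) 2 ≤ ν := by
      rw [Finsupp.single_le_iff]; exact hi
    have : (monomial ν) (coeff ν p) =
        (X (inl i) : Rn n) ^ 2 * monomial (ν - Finsupp.single (inl i) 2) (coeff ν p) := by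
      have hX : (X (inl i) : Rn n) ^ 2 = monomial (Finsupp.single (inl i) 2) 1 :=
        X_pow_eq_monomial
      rw [hX, monomial_mul, one_mul, add_tsub_cancel_of_le hle]
    rw [this]
    exact Ideal.mul_mem_right _ _ (Ideal.subset_span ⟨i, rfl⟩)

lemma mk_eq_mk_iff {p q : Rn n} :
    Ideal.Quotient.mk (sqIdealK n) p = Ideal.Quotient.mk (sqIdealK n) q ↔
      sfpart p = sfpart q := by
  have h1 : Ideal.Quotient.mk (sqIdealK n) p = Ideal.Quotient.mk (sqIdealK n) q ↔
      Ideal.Quotient.mk (sqIdealK n) (p + q) = 0 := by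
    constructor
    · intro h; rw [map_add, h, ← map_add, add_self_zero, map_zero]
    · intro h
      rw [map_add] at h
      have := add_eq_iff.1 h
      rw [zero_add] at this
      rw [this]
  rw [h1, mk_eq_zero_iff]
  constructor
  · intro h
    apply MvPolynomial.ext; intro lam
    rw [coeff_sfpart, coeff_sfpart]
    by_cases hl : SF lam
    · have := sfpart_eq_zero_iff.1 h lam hl
      rw [coeff_add] at this
      have := add_eq_iff.1 this
      rw [zero_add] at this
      simp [hl, this]
    · simp [hl]
  · intro h
    rw [sfpart_eq_zero_iff]
    intro lam hl
    have := congrArg (coeff lam) h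
    rw [coeff_sfpart, coeff_sfpart, if_pos hl, if_pos hl] at this
    rw [coeff_add, this, add_self_zero]

lemma mk_sfpart (p : Rn n) :
    Ideal.Quotient.mk (sqIdealK n) (sfpart p) = Ideal.Quotient.mk (sqIdealK n) p := by
  rw [mk_eq_mk_iff]
  apply MvPolynomial.ext; intro lam
  rw [coeff_sfpart (sfpart p), coeff_sfpart]
  by_cases hl : SF lam <;> simp [hl, coeff_sfpart]


def Orb (μ : Vn n →₀ ℕ) : Finset (Vn n →₀ ℕ) :=
  Finset.image (fun g : Equiv.Perm (Fin n) => act g μ) Finset.univ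

lemma mem_Orb {μ ν : Vn n →₀ ℕ} : ν ∈ Orb μ ↔ ∃ σ, act σ μ = ν := by
  simp [Orb]

lemma self_mem_Orb (μ : Vn n →₀ ℕ) : μ ∈ Orb μ := mem_Orb.2 ⟨1, act_one μ⟩

noncomputable def OS (μ : Vn n →₀ ℕ) : Rn n := ∑ ν ∈ Orb μ, monomial ν (1 : ZMod 2)

lemma coeff_OS (μ : Vn n →₀ ℕ) (lam : Vn n →₀ ℕ) :
    coeff lam (OS μ) = if lam ∈ Orb μ then 1 else 0 := by
  rw [OS, coeff_sum]
  simp only [coeff_monomial]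
  rw [Finset.sum_ite_eq' (Orb μ) lam (fun _ => (1 : ZMod 2))]

lemma orbitSum_eq (μ : Vn n →₀ ℕ) :
    orbitSum n μ = Ideal.Quotient.mk (sqIdealK n) (OS μ) := rfl

lemma coe_sumCongr (g : Equiv.Perm (Fin n)) : ⇑(Equiv.sumCongr g g) = Sum.map ⇑g ⇑g := by
  funext v; cases v <;> rfl

lemma mapDomain_eq_act (g : Equiv.Perm (Fin n)) (ν : Vn n →₀ ℕ) :
    Finsupp.mapDomain (Sum.map ⇑g ⇑g) ν = act g ν := by
  rw [act, Finsupp.equivMapDomain_eq_mapDomain, coe_sumCongr]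

lemma rename_monomial_act (g : Equiv.Perm (Fin n)) (ν : Vn n →₀ ℕ) (c : ZMod 2) :
    rename (Sum.map ⇑g ⇑g) (monomial ν c) = monomial (act g ν) c := by
  rw [rename_monomial, mapDomain_eq_act]

lemma Orb_image_act (g : Equiv.Perm (Fin n)) (μ : Vn n →₀ ℕ) :
    (Orb μ).image (act g) = Orb μ := by
  ext ν
  simp only [Finset.mem_image]
  constructor
  · rintro ⟨ν', hν', rfl⟩
    obtain ⟨σ, rfl⟩ := mem_Orb.1 hν'
    exact mem_Orb.2 ⟨g * σ, (act_act g σ μ).symm⟩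
  · intro hν
    obtain ⟨σ, rfl⟩ := mem_Orb.1 hν
    exact ⟨act (g⁻¹ * σ) μ, mem_Orb.2 ⟨g⁻¹ * σ, rfl⟩, by rw [act_act, mul_inv_cancel_left]⟩

lemma OS_invariant (g : Equiv.Perm (Fin n)) (μ : Vn n →₀ ℕ) :
    rename (Sum.map ⇑g ⇑g) (OS μ) = OS μ := by
  rw [OS, map_sum]
  simp only [rename_monomial_act]
  rw [← Finset.sum_image (f := fun ν => monomial ν (1 : ZMod 2)) (g := act g)
    (fun x _ y _ h => act_injective g h), Orb_image_act]

lemma coeff_rename_eq (g : Equiv.Perm (Fin n)) (q : Rn n) (lam : Vn n →₀ ℕ) :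
    coeff lam (rename (Sum.map ⇑g ⇑g) q) = coeff (act g⁻¹ lam) q := by
  have hinj : Function.Injective (Sum.map ⇑g ⇑g) :=
    Function.Injective.sumMap (Equiv.injective _) (Equiv.injective _)
  have hd : Finsupp.mapDomain (Sum.map ⇑g ⇑g) (act g⁻¹ lam) = lam := by
    rw [mapDomain_eq_act, act_act, mul_inv_cancel, act_one]
  conv_lhs => rw [← hd]
  rw [coeff_rename_mapDomain _ hinj]

lemma coeff_act_of_invariant {g : Equiv.Perm (Fin n)} {p : Rn n}
    (h : rename (Sum.map ⇑g ⇑g) p = p) (ν : Vn n →₀ ℕ) :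
    coeff (act g ν) p = coeff ν p := by
  conv_lhs => rw [← h]
  rw [coeff_rename_eq, act_act, inv_mul_cancel, act_one]

lemma invariant_inv {g : Equiv.Perm (Fin n)} {p : Rn n}
    (h : rename (Sum.map ⇑g ⇑g) p = p) :
    rename (Sum.map ⇑g⁻¹ ⇑g⁻¹) p = p := by
  conv_lhs => rw [← h]
  rw [MvPolynomial.rename_rename]
  have hid : (Sum.map ⇑g⁻¹ ⇑g⁻¹) ∘ (Sum.map ⇑g ⇑g) = id := by
    funext v; cases v <;> simp
  rw [hid]
  exact rename_id_apply p

lemma SF_act_iff {g : Equiv.Perm (Fin n)} {μ : Vn n →₀ ℕ} : SF (act g μ) ↔ SF μ := by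
  constructor
  · intro h
    have := SF_act (σ := g⁻¹) h
    rwa [act_act, inv_mul_cancel, act_one] at this
  · exact SF_act

lemma sfpart_invariant {g : Equiv.Perm (Fin n)} {p : Rn n}
    (h : rename (Sum.map ⇑g ⇑g) p = p) :
    rename (Sum.map ⇑g ⇑g) (sfpart p) = sfpart p := by
  apply MvPolynomial.ext
  intro lam
  rw [coeff_rename_eq, coeff_sfpart, coeff_sfpart]
  have hSF : SF (act g⁻¹ lam) ↔ SF lam := by
    rw [SF_act_iff]
  have hco : coeff (act g⁻¹ lam) p = coeff lam p := coeff_act_of_invariant (invariant_inv h) lam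
  exact if_congr hSF hco rfl

lemma permActK_mk (g : Equiv.Perm (Fin n)) (p : Rn n) :
    permActK n g (Ideal.Quotient.mk (sqIdealK n) p) =
      Ideal.Quotient.mk (sqIdealK n) (rename (Sum.map ⇑g ⇑g) p) := by
  simp [permActK, Ideal.Quotient.liftₐ_apply, Ideal.Quotient.lift_mk]
  rfl

lemma mk_mem_Ln {p : Rn n} (h : ∀ g : Equiv.Perm (Fin n), rename (Sum.map ⇑g ⇑g) p = p) :
    Ideal.Quotient.mk (sqIdealK n) p ∈ Ln n := by
  intro g
  rw [permActK_mk, h g]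

lemma augK_mk (p : Rn n) :
    augK n (Ideal.Quotient.mk (sqIdealK n) p) = aeval 0 p := by
  simp [augK, Ideal.Quotient.liftₐ_apply, Ideal.Quotient.lift_mk]

lemma aeval_zero_OS {μ : Vn n →₀ ℕ} (h : μ ≠ 0) : (aeval (0 : Vn n → ZMod 2)) (OS μ) = 0 := by
  rw [OS, map_sum]
  apply Finset.sum_eq_zero
  intro ν hν
  obtain ⟨σ, rfl⟩ := mem_Orb.1 hν
  have hν0 : act σ μ ≠ 0 := by
    intro hc
    apply h
    apply act_injective σ
    rw [hc]
    ext v; cases v <;> simp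
  obtain ⟨v, hv⟩ := Finsupp.ne_iff.1 hν0
  simp only [Finsupp.coe_zero, Pi.zero_apply] at hv
  rw [aeval_monomial]
  have hz : ((act σ μ).prod fun i k => (0 : Vn n → ZMod 2) i ^ k) = 0 := by
    rw [Finsupp.prod]
    apply Finset.prod_eq_zero (Finsupp.mem_support_iff.2 hv)
    simp [zero_pow hv]
  rw [hz, mul_zero]


lemma exists_perm_extend (s : Finset (Fin n)) (f : Fin n → Fin n)
    (hf : Set.InjOn f ↑s) : ∃ σ : Equiv.Perm (Fin n), ∀ i ∈ s, σ i = f i := by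
  classical
  set t := s.image f with ht
  have hbij : Function.Bijective (fun x : {x // x ∈ s} => (⟨f x.1, Finset.mem_image_of_mem f x.2⟩ : {x // x ∈ t})) := by
    constructor
    · rintro ⟨x, hx⟩ ⟨y, hy⟩ hxy
      simp only [Subtype.mk.injEq] at hxy ⊢
      exact hf hx hy hxy
    · rintro ⟨y, hy⟩
      obtain ⟨x, hx, hfx⟩ := Finset.mem_image.1 hy
      exact ⟨⟨x, hx⟩, by simp [hfx]⟩
  set e := Equiv.ofBijective _ hbij with he
  refine ⟨e.extendSubtype, fun i hi => ?_⟩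
  have := e.extendSubtype_apply_of_mem i hi
  rw [this, he]
  rfl


noncomputable def muA (ν : Vn n →₀ ℕ) : Vn n →₀ ℕ :=
  Finsupp.equivFunOnFinite.symm (Sum.elim (fun i => if i ∈ bnd ν then 1 else 0)
    (fun i => if i ∈ bnd ν then ν (inr i) else 0))

noncomputable def muB (ν : Vn n →₀ ℕ) : Vn n →₀ ℕ :=
  Finsupp.equivFunOnFinite.symm (Sum.elim (fun i => if i ∈ fre ν then 1 else 0)
    (fun i => if i ∈ fb ν then ν (inr i) else 0))

@[simp] lemma muA_inl (ν : Vn n →₀ ℕ) (i : Fin n) :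
    muA ν (inl i) = if i ∈ bnd ν then 1 else 0 := rfl

@[simp] lemma muA_inr (ν : Vn n →₀ ℕ) (i : Fin n) :
    muA ν (inr i) = if i ∈ bnd ν then ν (inr i) else 0 := rfl

@[simp] lemma muB_inl (ν : Vn n →₀ ℕ) (i : Fin n) :
    muB ν (inl i) = if i ∈ fre ν then 1 else 0 := rfl

@[simp] lemma muB_inr (ν : Vn n →₀ ℕ) (i : Fin n) :
    muB ν (inr i) = if i ∈ fb ν then ν (inr i) else 0 := rfl

lemma mem_image_perm {s : Finset (Fin n)} {ρ : Equiv.Perm (Fin n)} {i : Fin n} :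
    i ∈ s.image ⇑ρ ↔ ρ⁻¹ i ∈ s := by
  constructor
  · rintro h
    obtain ⟨a, ha, rfl⟩ := Finset.mem_image.1 h
    simpa using ha
  · intro h
    exact Finset.mem_image.2 ⟨ρ⁻¹ i, h, by simp⟩

lemma muA_add_muB {ν : Vn n →₀ ℕ} (hSF : SF ν) : muA ν + muB ν = ν := by
  ext v
  rw [Finsupp.add_apply]
  cases v with
  | inl i =>
    have hs := hSF i
    rw [muA_inl, muB_inl]
    by_cases h1 : ν (inl i) = 0 <;> by_cases h2 : ν (inr i) = 0 <;>
      simp [mem_bnd, mem_fre, h1, h2] <;> omega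
  | inr i =>
    rw [muA_inr, muB_inr]
    by_cases h1 : ν (inl i) = 0 <;> by_cases h2 : ν (inr i) = 0 <;>
      simp [mem_bnd, mem_fb, h1, h2]

lemma disj_bnd_fre (ν : Vn n →₀ ℕ) : Disjoint (bnd ν) (fre ν) := by
  rw [Finset.disjoint_left]
  intro a h1 h2
  rw [mem_bnd] at h1; rw [mem_fre] at h2
  exact h1.2 h2.2

lemma disj_bnd_fb (ν : Vn n →₀ ℕ) : Disjoint (bnd ν) (fb ν) := by
  rw [Finset.disjoint_left]
  intro a h1 h2
  rw [mem_bnd] at h1; rw [mem_fb] at h2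
  exact h1.1 h2.1

lemma disj_fre_fb (ν : Vn n →₀ ℕ) : Disjoint (fre ν) (fb ν) := by
  rw [Finset.disjoint_left]
  intro a h1 h2
  rw [mem_fre] at h1; rw [mem_fb] at h2
  exact h1.1 h2.1

section Pair

variable {ν : Vn n →₀ ℕ} {ρ τ : Equiv.Perm (Fin n)}

lemma lam_inl (ν : Vn n →₀ ℕ) (ρ τ : Equiv.Perm (Fin n)) (i : Fin n) :
    (act ρ (muA ν) + act τ (muB ν)) (inl i) =
      (if i ∈ (bnd ν).image ⇑ρ then 1 else 0) +
        (if i ∈ (fre ν).image ⇑τ then 1 else 0) := by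
  rw [Finsupp.add_apply, act_inl, act_inl, muA_inl, muB_inl]
  simp only [mem_image_perm]

lemma lam_inr (ν : Vn n →₀ ℕ) (ρ τ : Equiv.Perm (Fin n)) (i : Fin n) :
    (act ρ (muA ν) + act τ (muB ν)) (inr i) =
      (if i ∈ (bnd ν).image ⇑ρ then ν (inr (ρ⁻¹ i)) else 0) +
        (if i ∈ (fb ν).image ⇑τ then ν (inr (τ⁻¹ i)) else 0) := by
  rw [Finsupp.add_apply, act_inr, act_inr, muA_inr, muB_inr]
  simp only [mem_image_perm]

lemma pair_disjBJ (h : SF (act ρ (muA ν) + act τ (muB ν))) :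
    Disjoint ((bnd ν).image ⇑ρ) ((fre ν).image ⇑τ) := by
  rw [Finset.disjoint_left]
  intro i h1 h2
  have := h i
  rw [lam_inl ν ρ τ i, if_pos h1, if_pos h2] at this
  omega

lemma img_bnd_ne (h1 : i ∈ (bnd ν).image ⇑ρ) : ν (inr (ρ⁻¹ i)) ≠ 0 :=
  (mem_bnd.1 (mem_image_perm.1 h1)).2

lemma img_fb_ne (h3 : i ∈ (fb ν).image ⇑τ) : ν (inr (τ⁻¹ i)) ≠ 0 :=
  (mem_fb.1 (mem_image_perm.1 h3)).2

lemma disj_JK_img : Disjoint ((fre ν).image ⇑τ) ((fb ν).image ⇑τ) :=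
  (Finset.disjoint_image (Equiv.injective τ)).2 (disj_fre_fb ν)

lemma bnd_lam :
    bnd (act ρ (muA ν) + act τ (muB ν)) = (bnd ν).image ⇑ρ := by
  ext i
  rw [mem_bnd, lam_inl, lam_inr]
  by_cases h1 : i ∈ (bnd ν).image ⇑ρ
  · have := img_bnd_ne (ρ := ρ) (ν := ν) h1
    rw [Equiv.Perm.inv_def] at this
    simp [h1, this]
  · by_cases h2 : i ∈ (fre ν).image ⇑τ
    · have h3 : i ∉ (fb ν).image ⇑τ := Finset.disjoint_left.1 disj_JK_img h2
      simp [h1, h2, h3]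
    · simp [h1, h2]

lemma fre_lam (h : SF (act ρ (muA ν) + act τ (muB ν))) :
    fre (act ρ (muA ν) + act τ (muB ν)) = (fre ν).image ⇑τ := by
  ext i
  rw [mem_fre, lam_inl, lam_inr]
  by_cases h2 : i ∈ (fre ν).image ⇑τ
  · have h1 : i ∉ (bnd ν).image ⇑ρ := Finset.disjoint_right.1 (pair_disjBJ h) h2
    have h3 : i ∉ (fb ν).image ⇑τ := Finset.disjoint_left.1 disj_JK_img h2
    simp [h1, h2, h3]
  · by_cases h1 : i ∈ (bnd ν).image ⇑ρ
    · have := img_bnd_ne (ρ := ρ) (ν := ν) h1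
      rw [Equiv.Perm.inv_def] at this
      simp [h1, h2, this]
    · simp [h1, h2]

lemma fb_lam :
    fb (act ρ (muA ν) + act τ (muB ν)) = (fb ν).image ⇑τ \ (bnd ν).image ⇑ρ := by
  ext i
  rw [mem_fb, lam_inl, lam_inr, Finset.mem_sdiff]
  by_cases h1 : i ∈ (bnd ν).image ⇑ρ
  · simp [h1]
  · by_cases h3 : i ∈ (fb ν).image ⇑τ
    · have h2 : i ∉ (fre ν).image ⇑τ := Finset.disjoint_right.1 disj_JK_img h3
      have := img_fb_ne (τ := τ) (ν := ν) h3
      rw [Equiv.Perm.inv_def] at this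
      simp [h1, h2, h3, this]
    · by_cases h2 : i ∈ (fre ν).image ⇑τ
      · simp [h1, h2, h3]
      · simp [h1, h2, h3]

lemma pair_in_orbit (hSF : SF ν) (h : SF (act ρ (muA ν) + act τ (muB ν)))
    (hdisj : Disjoint ((fb ν).image ⇑τ) ((bnd ν).image ⇑ρ)) :
    (act ρ (muA ν) + act τ (muB ν)) ∈ Orb ν := by
  classical
  have hBJ := pair_disjBJ h
  set f : Fin n → Fin n := fun i => if i ∈ bnd ν then ρ i else τ i with hf
  have hmemB : ∀ j ∈ bnd ν, f j = ρ j := fun j hj => by simp [hf, hj]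
  have hmemN : ∀ j, j ∉ bnd ν → f j = τ j := fun j hj => by simp [hf, hj]
  have hinj : Set.InjOn f ↑((bnd ν ∪ fre ν) ∪ fb ν) := by
    have key : ∀ x y, x ∈ ((bnd ν ∪ fre ν) ∪ fb ν) → y ∈ ((bnd ν ∪ fre ν) ∪ fb ν) →
        x ∈ bnd ν → y ∉ bnd ν → f x ≠ f y := by
      intro x y _ hy hxb hyb hxy
      have h1 : f x ∈ (bnd ν).image ⇑ρ := by
        rw [hmemB x hxb]; exact Finset.mem_image_of_mem _ hxb
      have hyy : y ∈ fre ν ∨ y ∈ fb ν := by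
        rcases Finset.mem_union.1 hy with h'|h'
        · rcases Finset.mem_union.1 h' with h''|h''
          · exact absurd h'' hyb
          · exact Or.inl h''
        · exact Or.inr h'
      rw [hxy, hmemN y hyb] at h1
      rcases hyy with h'|h'
      · exact Finset.disjoint_left.1 hBJ h1 (Finset.mem_image_of_mem _ h')
      · exact Finset.disjoint_right.1 hdisj h1 (Finset.mem_image_of_mem _ h')
    intro x hx y hy hxy
    rw [Finset.mem_coe] at hx hy
    by_cases hxb : x ∈ bnd ν <;> by_cases hyb : y ∈ bnd ν
    · exact ρ.injective (by rwa [hmemB x hxb, hmemB y hyb] at hxy)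
    · exact absurd hxy (key x y hx hy hxb hyb)
    · exact absurd hxy.symm (key y x hy hx hyb hxb)
    · exact τ.injective (by rwa [hmemN x hxb, hmemN y hyb] at hxy)
  obtain ⟨σ, hσ⟩ := exists_perm_extend _ f hinj
  have hσb : ∀ j ∈ bnd ν, σ j = ρ j := fun j hj => by
    rw [hσ j (Finset.mem_union_left _ (Finset.mem_union_left _ hj)), hmemB j hj]
  have hσf : ∀ j ∈ fre ν, σ j = τ j := fun j hj => by
    rw [hσ j (Finset.mem_union_left _ (Finset.mem_union_right _ hj)),
      hmemN j (Finset.disjoint_right.1 (disj_bnd_fre ν) hj)]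
  have hσk : ∀ j ∈ fb ν, σ j = τ j := fun j hj => by
    rw [hσ j (Finset.mem_union_right _ hj),
      hmemN j (Finset.disjoint_right.1 (disj_bnd_fb ν) hj)]
  refine mem_Orb.2 ⟨σ, ?_⟩
  ext v
  cases v with
  | inl i =>
    rw [act_inl, lam_inl]
    by_cases h1 : i ∈ (bnd ν).image ⇑ρ
    · obtain ⟨j, hj, hji⟩ := Finset.mem_image.1 h1
      have hji' : σ⁻¹ i = j := by rw [← hji, ← hσb j hj]; simp
      have h2 : i ∉ (fre ν).image ⇑τ := Finset.disjoint_left.1 hBJ h1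
      have hsf := hSF j
      have hjb := (mem_bnd.1 hj).1
      rw [hji']
      simp only [h1, h2, if_true, if_false]
      omega
    · by_cases h2 : i ∈ (fre ν).image ⇑τ
      · obtain ⟨j, hj, hji⟩ := Finset.mem_image.1 h2
        have hji' : σ⁻¹ i = j := by rw [← hji, ← hσf j hj]; simp
        have hsf := hSF j
        have hjb := (mem_fre.1 hj).1
        rw [hji']
        simp only [h1, h2, if_true, if_false]
        omega
      · simp only [h1, h2, if_false, add_zero]
        by_contra hc
        set j := σ⁻¹ i with hjdef
        have hij : σ j = i := by rw [hjdef]; simp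
        by_cases hr : ν (inr j) = 0
        · have hjf : j ∈ fre ν := mem_fre.2 ⟨hc, hr⟩
          exact h2 (Finset.mem_image.2 ⟨j, hjf, by rw [← hσf j hjf, hij]⟩)
        · have hjb : j ∈ bnd ν := mem_bnd.2 ⟨hc, hr⟩
          exact h1 (Finset.mem_image.2 ⟨j, hjb, by rw [← hσb j hjb, hij]⟩)
  | inr i =>
    rw [act_inr, lam_inr]
    by_cases h1 : i ∈ (bnd ν).image ⇑ρ
    · obtain ⟨j, hj, hji⟩ := Finset.mem_image.1 h1
      have hji' : σ⁻¹ i = j := by rw [← hji, ← hσb j hj]; simp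
      have hjr : ρ⁻¹ i = j := by rw [← hji]; simp
      have h3 : i ∉ (fb ν).image ⇑τ := Finset.disjoint_right.1 hdisj h1
      rw [hji', hjr]
      simp [h1, h3]
    · by_cases h3 : i ∈ (fb ν).image ⇑τ
      · obtain ⟨j, hj, hji⟩ := Finset.mem_image.1 h3
        have hji' : σ⁻¹ i = j := by rw [← hji, ← hσk j hj]; simp
        have hjr : τ⁻¹ i = j := by rw [← hji]; simp
        rw [hji', hjr]
        simp [h1, h3]
      · simp only [h1, h3, if_false, add_zero]
        by_contra hc
        set j := σ⁻¹ i with hjdef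
        have hij : σ j = i := by rw [hjdef]; simp
        by_cases hl : ν (inl j) = 0
        · have hjf : j ∈ fb ν := mem_fb.2 ⟨hl, hc⟩
          exact h3 (Finset.mem_image.2 ⟨j, hjf, by rw [← hσk j hjf, hij]⟩)
        · have hjb : j ∈ bnd ν := mem_bnd.2 ⟨hl, hc⟩
          exact h1 (Finset.mem_image.2 ⟨j, hjb, by rw [← hσb j hjb, hij]⟩)

lemma pair_unique (hSF : SF ν) (σ : Equiv.Perm (Fin n))
    (hlam : act ρ (muA ν) + act τ (muB ν) = act σ ν) :
    act ρ (muA ν) = act σ (muA ν) ∧ act τ (muB ν) = act σ (muB ν) := by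
  have hSFlam : SF (act ρ (muA ν) + act τ (muB ν)) := by rw [hlam]; exact SF_act hSF
  have hB : (bnd ν).image ⇑ρ = (bnd ν).image ⇑σ := by
    rw [← bnd_lam (ν := ν) (ρ := ρ) (τ := τ), hlam, bnd_act]
  have hK' : (fb ν).image ⇑τ \ (bnd ν).image ⇑ρ = (fb ν).image ⇑σ := by
    rw [← fb_lam (ν := ν) (ρ := ρ) (τ := τ), hlam, fb_act]
  have hcard : ((fb ν).image ⇑τ).card ≤ ((fb ν).image ⇑τ \ (bnd ν).image ⇑ρ).card := by
    rw [hK', Finset.card_image_of_injective _ (Equiv.injective σ),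
      Finset.card_image_of_injective _ (Equiv.injective τ)]
  have hKfull : (fb ν).image ⇑τ \ (bnd ν).image ⇑ρ = (fb ν).image ⇑τ :=
    (Finset.eq_of_subset_of_card_le (Finset.sdiff_subset) hcard).symm ▸ rfl
  have hdisjKB : Disjoint ((fb ν).image ⇑τ) ((bnd ν).image ⇑ρ) := by
    rw [← Finset.sdiff_eq_self_iff_disjoint] at *
    exact hKfull
  have hK : (fb ν).image ⇑τ = (fb ν).image ⇑σ := by rw [← hKfull, hK']
  have hA : act ρ (muA ν) = act σ (muA ν) := by
    ext v
    cases v with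
    | inl i =>
      rw [act_inl, act_inl, muA_inl, muA_inl]
      have : (ρ⁻¹ i ∈ bnd ν) ↔ (σ⁻¹ i ∈ bnd ν) := by
        rw [← mem_image_perm, ← mem_image_perm, hB]
      rw [if_congr this rfl rfl]
    | inr i =>
      rw [act_inr, act_inr, muA_inr, muA_inr]
      have hiff : (ρ⁻¹ i ∈ bnd ν) ↔ (σ⁻¹ i ∈ bnd ν) := by
        rw [← mem_image_perm, ← mem_image_perm, hB]
      by_cases h1 : i ∈ (bnd ν).image ⇑ρ
      · have h1ρ := mem_image_perm.1 h1
        have h1σ := hiff.1 h1ρ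
        have h3 : i ∉ (fb ν).image ⇑τ := Finset.disjoint_right.1 hdisjKB h1
        have hval := congrArg (fun m => m (inr i)) hlam
        simp only [lam_inr, act_inr] at hval
        rw [if_pos h1, if_neg h3, add_zero] at hval
        rw [if_pos h1ρ, if_pos h1σ, hval]
      · have h1ρ : ρ⁻¹ i ∉ bnd ν := fun hc => h1 (mem_image_perm.2 hc)
        have h1σ : σ⁻¹ i ∉ bnd ν := fun hc => h1 (hB ▸ mem_image_perm.2 hc)
        rw [if_neg h1ρ, if_neg h1σ]
  refine ⟨hA, ?_⟩
  have hdecomp : act σ ν = act σ (muA ν) + act σ (muB ν) := by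
    rw [← act_add, muA_add_muB hSF]
  rw [hdecomp, hA] at hlam
  exact add_left_cancel hlam

end Pair

lemma coeff_OS_mul (μ1 μ2 lam : Vn n →₀ ℕ) :
    coeff lam (OS μ1 * OS μ2) =
      (((Orb μ1 ×ˢ Orb μ2).filter (fun ab => ab.1 + ab.2 = lam)).card : ZMod 2) := by
  rw [OS, OS, Finset.sum_mul_sum]
  simp only [monomial_mul, mul_one]
  rw [← Finset.sum_product']
  rw [coeff_sum]
  simp only [coeff_monomial]
  rw [Finset.sum_boole]

lemma coeff_prod_orbit {ν : Vn n →₀ ℕ} (hSF : SF ν) (σ : Equiv.Perm (Fin n)) :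
    coeff (act σ ν) (OS (muA ν) * OS (muB ν)) = 1 := by
  rw [coeff_OS_mul]
  have : ((Orb (muA ν) ×ˢ Orb (muB ν)).filter (fun ab => ab.1 + ab.2 = act σ ν))
      = {(act σ (muA ν), act σ (muB ν))} := by
    apply Finset.eq_singleton_iff_unique_mem.2
    constructor
    · rw [Finset.mem_filter]
      refine ⟨Finset.mem_product.2 ⟨mem_Orb.2 ⟨σ, rfl⟩, mem_Orb.2 ⟨σ, rfl⟩⟩, ?_⟩
      rw [← act_add, muA_add_muB hSF]
    · rintro ⟨a, b⟩ hab
      rw [Finset.mem_filter, Finset.mem_product] at hab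
      obtain ⟨⟨ha, hb⟩, hsum⟩ := hab
      obtain ⟨ρ, rfl⟩ := mem_Orb.1 ha
      obtain ⟨τ, rfl⟩ := mem_Orb.1 hb
      obtain ⟨e1, e2⟩ := pair_unique hSF σ hsum
      rw [e1, e2]
  rw [this, Finset.card_singleton]
  rfl

lemma coeff_prod_shape {ν : Vn n →₀ ℕ} (hSF : SF ν) (hb : (bnd ν).Nonempty)
    (hf : (fre ν).Nonempty) {lam : Vn n →₀ ℕ} (hlam : SF lam)
    (hne : coeff lam (OS (muA ν) * OS (muB ν)) ≠ 0) :
    (bnd lam).Nonempty ∧ (fre lam).Nonempty ∧ (fb lam).card ≤ (fb ν).card ∧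
      (lam ∈ Orb ν ∨ (fb lam).card < (fb ν).card) := by
  rw [coeff_OS_mul] at hne
  have hfil : ((Orb (muA ν) ×ˢ Orb (muB ν)).filter (fun ab => ab.1 + ab.2 = lam)).Nonempty := by
    rw [Finset.nonempty_iff_ne_empty]
    intro hc
    rw [hc] at hne
    simp at hne
  obtain ⟨⟨a, b⟩, hab⟩ := hfil
  rw [Finset.mem_filter, Finset.mem_product] at hab
  obtain ⟨⟨ha, hb'⟩, hsum⟩ := hab
  obtain ⟨ρ, rfl⟩ := mem_Orb.1 ha
  obtain ⟨τ, rfl⟩ := mem_Orb.1 hb'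
  subst hsum
  have hbndlam := bnd_lam (ν := ν) (ρ := ρ) (τ := τ)
  have hfrelam := fre_lam (ν := ν) (ρ := ρ) (τ := τ) hlam
  have hfblam := fb_lam (ν := ν) (ρ := ρ) (τ := τ)
  refine ⟨?_, ?_, ?_, ?_⟩
  · rw [hbndlam]; exact hb.image ⇑ρ
  · rw [hfrelam]; exact hf.image ⇑τ
  · rw [hfblam]
    calc ((fb ν).image ⇑τ \ (bnd ν).image ⇑ρ).card ≤ ((fb ν).image ⇑τ).card :=
          Finset.card_le_card Finset.sdiff_subset
    _ = (fb ν).card := Finset.card_image_of_injective _ (Equiv.injective τ)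
  · by_cases hd : Disjoint ((fb ν).image ⇑τ) ((bnd ν).image ⇑ρ)
    · exact Or.inl (pair_in_orbit hSF hlam hd)
    · right
      rw [hfblam]
      rw [Finset.not_disjoint_iff] at hd
      obtain ⟨x, hx1, hx2⟩ := hd
      have hss : (fb ν).image ⇑τ \ (bnd ν).image ⇑ρ ⊂ (fb ν).image ⇑τ := by
        rw [Finset.ssubset_iff_of_subset Finset.sdiff_subset]
        exact ⟨x, hx1, fun hc => (Finset.mem_sdiff.1 hc).2 hx2⟩
      calc ((fb ν).image ⇑τ \ (bnd ν).image ⇑ρ).card < ((fb ν).image ⇑τ).card :=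
            Finset.card_lt_card hss
      _ = (fb ν).card := Finset.card_image_of_injective _ (Equiv.injective τ)

lemma cancel2 {A : Type*} [AddCommMonoid A] [Module (ZMod 2) A] (a b : A) :
    a = b + (a + b) := by
  rw [add_comm a b, ← add_assoc, add_self_zero, zero_add]

lemma zmod2_ne_zero {u : ZMod 2} (h : u ≠ 0) : u = 1 := by
  revert u; decide

lemma muA_ne_zero {ν : Vn n →₀ ℕ} (hb : (bnd ν).Nonempty) : muA ν ≠ 0 := by
  obtain ⟨i, hi⟩ := hb
  intro hc
  have := congrArg (fun m => m (inl i)) hc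
  simp [hi] at this

lemma muB_ne_zero {ν : Vn n →₀ ℕ} (hf : (fre ν).Nonempty) : muB ν ≠ 0 := by
  obtain ⟨i, hi⟩ := hf
  intro hc
  have := congrArg (fun m => m (inl i)) hc
  simp [hi] at this

lemma OS_elem_mem_aug {μ : Vn n →₀ ℕ} (hμ : μ ≠ 0) :
    (⟨Ideal.Quotient.mk (sqIdealK n) (OS μ), mk_mem_Ln (fun g => OS_invariant g μ)⟩ : Ln n)
      ∈ augIdealL n := by
  rw [augIdealL, RingHom.mem_ker]
  show augK n (Ideal.Quotient.mk (sqIdealK n) (OS μ)) = 0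
  rw [augK_mk]
  exact aeval_zero_OS hμ

lemma strip (k : ℕ) (p : Rn n)
    (hinv : ∀ g : Equiv.Perm (Fin n), rename (Sum.map ⇑g ⇑g) p = p)
    (hshape : ∀ ν ∈ p.support, SF ν ∧ (bnd ν).Nonempty ∧ (fre ν).Nonempty ∧ (fb ν).card ≤ k)
    (ν : Vn n →₀ ℕ) (hν : ν ∈ p.support) (hνk : (fb ν).card = k) :
    ∃ (p' : Rn n) (z : Ln n), z ∈ (augIdealL n) ^ 2 ∧
      (∀ g : Equiv.Perm (Fin n), rename (Sum.map ⇑g ⇑g) p' = p') ∧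
      (∀ ν' ∈ p'.support, SF ν' ∧ (bnd ν').Nonempty ∧ (fre ν').Nonempty ∧ (fb ν').card ≤ k) ∧
      (p'.support.filter (fun ν' => (fb ν').card = k)) ⊆
        (p.support.filter (fun ν' => (fb ν').card = k)).erase ν ∧
      Ideal.Quotient.mk (sqIdealK n) p = (z : Kn n) + Ideal.Quotient.mk (sqIdealK n) p' := by
  classical
  obtain ⟨hSFν, hbν, hfν, _⟩ := hshape ν hν
  set yA : Ln n := ⟨Ideal.Quotient.mk (sqIdealK n) (OS (muA ν)),
    mk_mem_Ln (fun g => OS_invariant g (muA ν))⟩ with hyA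
  set yB : Ln n := ⟨Ideal.Quotient.mk (sqIdealK n) (OS (muB ν)),
    mk_mem_Ln (fun g => OS_invariant g (muB ν))⟩ with hyB
  set q : Rn n := p + OS (muA ν) * OS (muB ν) with hq
  have hqinv : ∀ g : Equiv.Perm (Fin n), rename (Sum.map ⇑g ⇑g) q = q := by
    intro g
    rw [hq, map_add, map_mul, hinv g, OS_invariant g, OS_invariant g]
  refine ⟨sfpart q, yA * yB, ?_, ?_, ?_, ?_, ?_⟩
  · rw [sq]
    exact Ideal.mul_mem_mul (OS_elem_mem_aug (muA_ne_zero hbν)) (OS_elem_mem_aug (muB_ne_zero hfν))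
  · intro g
    exact sfpart_invariant (hqinv g)
  · intro ν' hν'
    have hc' : coeff ν' (sfpart q) ≠ 0 := MvPolynomial.mem_support_iff.1 hν'
    rw [coeff_sfpart] at hc'
    by_cases hSF' : SF ν'
    · rw [if_pos hSF'] at hc'
      rw [hq, coeff_add] at hc'
      by_cases hp1 : coeff ν' p = 0
      · have hprod : coeff ν' (OS (muA ν) * OS (muB ν)) ≠ 0 := by
          intro hc; rw [hp1, hc, add_zero] at hc'; exact hc' rfl
        obtain ⟨hb', hf', hle', _⟩ := coeff_prod_shape hSFν hbν hfν hSF' hprod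
        exact ⟨hSF', hb', hf', le_trans hle' (le_of_eq hνk)⟩
      · exact hshape ν' (MvPolynomial.mem_support_iff.2 hp1)
    · rw [if_neg hSF'] at hc'
      exact absurd rfl hc'
  · intro ν' hν'
    rw [Finset.mem_filter] at hν'
    obtain ⟨hsupp', hk'⟩ := hν'
    have hc' : coeff ν' (sfpart q) ≠ 0 := MvPolynomial.mem_support_iff.1 hsupp'
    rw [coeff_sfpart] at hc'
    have hSF' : SF ν' := by
      by_contra hc; rw [if_neg hc] at hc'; exact hc' rfl
    rw [if_pos hSF', hq, coeff_add] at hc'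
    have hnotorb : ν' ∉ Orb ν := by
      intro horb
      obtain ⟨σ, rfl⟩ := mem_Orb.1 horb
      have h1 : coeff (act σ ν) p = 1 := by
        rw [coeff_act_of_invariant (hinv σ)]
        exact zmod2_ne_zero (MvPolynomial.mem_support_iff.1 hν)
      have h2 := coeff_prod_orbit hSFν σ
      rw [h1, h2] at hc'
      exact hc' (by decide)
    have hprod0 : coeff ν' (OS (muA ν) * OS (muB ν)) = 0 := by
      by_contra hc
      obtain ⟨_, _, _, horb⟩ := coeff_prod_shape hSFν hbν hfν hSF' hc
      rcases horb with h | h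
      · exact hnotorb h
      · rw [hνk] at h; omega
    rw [hprod0, add_zero] at hc'
    rw [Finset.mem_erase, Finset.mem_filter]
    exact ⟨fun hc => hnotorb (hc ▸ self_mem_Orb ν), MvPolynomial.mem_support_iff.2 hc', hk'⟩
  · have hval : ((yA * yB : Ln n) : Kn n) =
        Ideal.Quotient.mk (sqIdealK n) (OS (muA ν) * OS (muB ν)) := by
      rw [map_mul]
      rfl
    rw [hval, mk_sfpart, hq, map_add, map_mul]
    exact cancel2 (A := Kn n) _ _

def KeyStmt (k c : ℕ) : Prop :=
  ∀ p : Rn n,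
    (∀ g : Equiv.Perm (Fin n), rename (Sum.map ⇑g ⇑g) p = p) →
    (∀ ν ∈ p.support, SF ν ∧ (bnd ν).Nonempty ∧ (fre ν).Nonempty ∧ (fb ν).card ≤ k) →
    (p.support.filter (fun ν => (fb ν).card = k)).card = c →
    ∃ y : Ln n, y ∈ (augIdealL n) ^ 2 ∧ (y : Kn n) = Ideal.Quotient.mk (sqIdealK n) p

lemma keystep (k c : ℕ) (hc : c ≠ 0) (ih : ∀ c' < c, KeyStmt (n := n) k c') :
    KeyStmt (n := n) k c := by
  intro p hinv hshape hcard
  have hne : (p.support.filter (fun ν => (fb ν).card = k)).Nonempty := by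
    rw [← Finset.card_pos, hcard]
    exact Nat.pos_of_ne_zero hc
  obtain ⟨ν, hνf⟩ := hne
  rw [Finset.mem_filter] at hνf
  obtain ⟨hν, hνk⟩ := hνf
  obtain ⟨p', z, hz, hinv', hshape', hsub, heq⟩ := strip k p hinv hshape ν hν hνk
  have hνf' : ν ∈ p.support.filter (fun ν' => (fb ν').card = k) :=
    Finset.mem_filter.2 ⟨hν, hνk⟩
  have hlt : (p'.support.filter (fun ν' => (fb ν').card = k)).card < c := by
    calc (p'.support.filter (fun ν' => (fb ν').card = k)).card
        ≤ ((p.support.filter (fun ν' => (fb ν').card = k)).erase ν).card :=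
          Finset.card_le_card hsub
      _ = c - 1 := by rw [Finset.card_erase_of_mem hνf', hcard]
      _ < c := Nat.sub_lt (Nat.pos_of_ne_zero hc) one_pos
  obtain ⟨y', hy', hy'val⟩ := ih _ hlt p' hinv' hshape' rfl
  refine ⟨z + y', add_mem hz hy', ?_⟩
  push_cast
  rw [hy'val, heq]

lemma key (k : ℕ) : ∀ (c : ℕ), KeyStmt (n := n) k c := by
  induction k with
  | zero =>
    intro c
    induction c using Nat.strong_induction_on with
    | _ c ih =>
      by_cases hc : c = 0
      · subst hc
        intro p hinv hshape hcard
        have hsupp : p.support = ∅ := by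
          by_contra hnem
          obtain ⟨ν, hν⟩ := Finset.nonempty_iff_ne_empty.2 hnem
          have h1 := (hshape ν hν).2.2.2
          have h2 : ν ∈ p.support.filter (fun ν' => (fb ν').card = 0) :=
            Finset.mem_filter.2 ⟨hν, Nat.le_zero.1 h1⟩
          rw [Finset.card_eq_zero] at hcard
          rw [hcard] at h2
          exact absurd h2 (Finset.notMem_empty ν)
        have hp0 : p = 0 := MvPolynomial.support_eq_empty.1 hsupp
        exact ⟨0, zero_mem _, by rw [hp0, map_zero]; rfl⟩
      · exact keystep 0 c hc ih
  | succ k ihk =>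
    intro c
    induction c using Nat.strong_induction_on with
    | _ c ih =>
      by_cases hc : c = 0
      · subst hc
        intro p hinv hshape hcard
        have hshape' : ∀ ν ∈ p.support, SF ν ∧ (bnd ν).Nonempty ∧ (fre ν).Nonempty ∧
            (fb ν).card ≤ k := by
          intro ν hν
          obtain ⟨h1, h2, h3, h4⟩ := hshape ν hν
          refine ⟨h1, h2, h3, ?_⟩
          have hnein : (fb ν).card ≠ k + 1 := by
            intro hceq
            have h5 : ν ∈ p.support.filter (fun ν' => (fb ν').card = k + 1) :=
              Finset.mem_filter.2 ⟨hν, hceq⟩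
            rw [Finset.card_eq_zero] at hcard
            rw [hcard] at h5
            exact absurd h5 (Finset.notMem_empty ν)
          omega
        exact ihk _ p hinv hshape' rfl
      · exact keystep (k + 1) c hc ih

lemma support_OS (μ : Vn n →₀ ℕ) : (OS μ).support = Orb μ := by
  ext lam
  rw [MvPolynomial.mem_support_iff, coeff_OS]
  by_cases h : lam ∈ Orb μ <;> simp [h]

end S13

open S13

theorem stmt13 (n : ℕ) (I J K : Finset (Fin n)) (d e : Fin n → ℕ)
    (hIJ : Disjoint I J) (hIK : Disjoint I K) (hJK : Disjoint J K)
    (hI : I.Nonempty) (hJ : J.Nonempty)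
    (hd : ∀ i ∈ I, 1 ≤ d i) (he : ∀ i ∈ K, 1 ≤ e i) :
    ∃ y : Ln n, y ∈ (augIdealL n) ^ 2 ∧
      (y : Kn n) = orbitSum n
        (Finsupp.equivFunOnFinite.symm (Sum.elim
          (fun i => if i ∈ I ∪ J then 1 else 0)
          (fun i => if i ∈ I then d i else if i ∈ K then e i else 0))) := by
  classical
  set ν : Vn n →₀ ℕ := Finsupp.equivFunOnFinite.symm (Sum.elim
      (fun i => if i ∈ I ∪ J then 1 else 0)
      (fun i => if i ∈ I then d i else if i ∈ K then e i else 0)) with hν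
  have hinl : ∀ i, ν (Sum.inl i) = (if i ∈ I ∪ J then 1 else 0) := fun i => rfl
  have hinr : ∀ i, ν (Sum.inr i) = (if i ∈ I then d i else if i ∈ K then e i else 0) :=
    fun i => rfl
  have hSFν : SF ν := by
    intro i
    rw [hinl]
    split <;> omega
  have hbnd : bnd ν = I := by
    ext i
    rw [mem_bnd, hinl, hinr]
    by_cases h1 : i ∈ I
    · have hd1 := hd i h1
      have h2 : i ∈ I ∪ J := Finset.mem_union_left _ h1
      simp only [h1, h2, if_true, iff_true]
      omega
    · by_cases h2 : i ∈ J
      · have h3 : i ∉ K := Finset.disjoint_left.1 hJK h2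
        have h4 : i ∈ I ∪ J := Finset.mem_union_right _ h2
        simp [h1, h3, h4]
      · have h4 : i ∉ I ∪ J := by
          rw [Finset.mem_union]; tauto
        simp [h1, h4]
  have hfre : fre ν = J := by
    ext i
    rw [mem_fre, hinl, hinr]
    by_cases h1 : i ∈ I
    · have hd1 := hd i h1
      have h2 : i ∈ I ∪ J := Finset.mem_union_left _ h1
      have h3 : i ∉ J := Finset.disjoint_left.1 hIJ h1
      simp only [h1, h2, h3, if_true, if_false, iff_false]
      omega
    · by_cases h2 : i ∈ J
      · have h3 : i ∉ K := Finset.disjoint_left.1 hJK h2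
        have h4 : i ∈ I ∪ J := Finset.mem_union_right _ h2
        simp [h1, h3, h4, h2]
      · have h4 : i ∉ I ∪ J := by
          rw [Finset.mem_union]; tauto
        simp [h1, h4, h2]
  have hfb : fb ν = K := by
    ext i
    rw [mem_fb, hinl, hinr]
    by_cases h1 : i ∈ I
    · have h2 : i ∈ I ∪ J := Finset.mem_union_left _ h1
      have h3 : i ∉ K := Finset.disjoint_left.1 hIK h1
      simp [h1, h2, h3]
    · by_cases h2 : i ∈ J
      · have h3 : i ∉ K := Finset.disjoint_left.1 hJK h2
        have h4 : i ∈ I ∪ J := Finset.mem_union_right _ h2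
        simp [h1, h3, h4]
      · have h4 : i ∉ I ∪ J := by
          rw [Finset.mem_union]; tauto
        by_cases h3 : i ∈ K
        · have he1 := he i h3
          simp only [h1, h3, h4, if_false, if_true, iff_true]
          exact ⟨trivial, by omega⟩
        · simp [h1, h3, h4]
  have hshape : ∀ ν' ∈ (OS ν).support,
      SF ν' ∧ (bnd ν').Nonempty ∧ (fre ν').Nonempty ∧ (fb ν').card ≤ K.card := by
    intro ν' hν'
    rw [support_OS] at hν'
    obtain ⟨σ, rfl⟩ := mem_Orb.1 hν'
    refine ⟨SF_act hSFν, ?_, ?_, ?_⟩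
    · rw [bnd_act, hbnd]; exact hI.image ⇑σ
    · rw [fre_act, hfre]; exact hJ.image ⇑σ
    · rw [fb_act, hfb, Finset.card_image_of_injective _ (Equiv.injective σ)]
  obtain ⟨y, hy, hval⟩ := key (n := n) K.card
    (((OS ν).support.filter (fun ν' => (fb ν').card = K.card)).card) (OS ν)
    (fun g => OS_invariant g ν) hshape rfl
  exact ⟨y, hy, by rw [hval]; rfl⟩
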